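/- arXiv:2212.00415 — 2 statements merged into one kernel-verified Lean document; each statement's English description precedes it below -/
import Mathlib

section
/- The algebra W(2)-bar does not satisfy the identity st^4_1: there exist a,b,c,d in W(2)-bar with Σ_{σ∈S_4} sgn(σ) (((x_{σ(1)}x_{σ(2)})x_{σ(3)})x_{σ(4)}) nonzero at (a,b,c,d). -/
def tbl (F : Type*) [Field F] : Fin 8 → Fin 8 → Fin 8 → F :=
  ![![![-1, 0, 0, 0, 0, 0, 0, 0], ![0, -3, 0, 0, 0, 0, 0, 0], ![0, 0, 1, 0, 0, 0, 0, 0], ![0, 0, 0, 3, 0, 0, 0, 0], ![0, 0, 0, 0, -1, 0, 0, 0], ![0, 0, 0, 0, 0, 1, 0, 0], ![0, 0, 0, 0, 0, 0, 1, 0], ![0, 0, 0, 0, 0, 0, 0, -1]],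
    ![![0, 3, 0, 0, 0, 0, 0, 0], ![0, 0, 0, 0, 0, 0, 0, 0], ![0, 0, 0, 0, 0, 0, 0, 0], ![0, 0, 0, 0, 0, 0, 0, 0], ![0, 0, 0, 0, 0, 0, 0, 0], ![0, 0, 0, 0, 0, 0, 0, 0], ![0, 0, 0, 0, 0, 0, 0, 0], ![0, 0, 0, 0, 0, 0, 0, 0]],
    ![![0, 0, -2, 0, 0, 0, 0, 0], ![0, 0, 0, 0, 0, 0, 0, 0], ![0, 0, 0, -3, 0, 0, 0, 0], ![0, 0, 0, 0, 0, 0, 0, 0], ![0, 0, 0, 0, 0, 1, 0, 0], ![0, 0, 0, 0, 0, 0, 0, 0], ![0, 0, 0, 0, 0, 0, 0, 0], ![0, 0, 0, 0, 0, 0, -1, 0]],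
    ![![0, 0, 0, 0, 0, 0, 0, 0], ![0, 0, 0, 0, 0, 0, 0, 0], ![0, 0, 0, 0, 0, 0, 0, 0], ![0, 0, 0, 0, 0, 0, 0, 0], ![0, 0, 0, 0, 0, 0, 0, 0], ![0, 0, 0, 0, 0, 0, 0, 0], ![0, 0, 0, 0, 0, 0, 0, 0], ![0, 0, 0, 0, 0, 0, 0, 0]],
    ![![-2, 0, 0, 0, 0, 0, 0, 0], ![0, -3, 0, 0, 0, 0, 0, 0], ![0, 0, -1, 0, 0, 0, 0, 0], ![0, 0, 0, 0, 0, 0, 0, 0], ![0, 0, 0, 0, -2, 0, 0, 0], ![0, 0, 0, 0, 0, -1, 0, 0], ![0, 0, 0, 0, 0, 0, -1, 0], ![0, 0, 0, 0, 0, 0, 0, -2]],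
    ![![0, 0, 2, 0, 0, 0, 0, 0], ![0, 0, 0, 0, 0, 0, 0, 0], ![0, 0, 0, 3, 0, 0, 0, 0], ![0, 0, 0, 0, 0, 0, 0, 0], ![0, 0, 0, 0, 0, -1, 0, 0], ![0, 0, 0, 0, 0, 0, 0, 0], ![0, 0, 0, 0, 0, 0, 0, 0], ![0, 0, 0, 0, 0, 0, 1, 0]],
    ![![0, 0, 2, 0, 0, 0, 0, 0], ![0, 0, 0, 0, 0, 0, 0, 0], ![0, 0, 0, 3, 0, 0, 0, 0], ![0, 0, 0, 0, 0, 0, 0, 0], ![0, 0, 0, 0, 0, -1, 0, 0], ![0, 0, 0, 0, 0, 0, 0, 0], ![0, 0, 0, 0, 0, 0, 0, 0], ![0, 0, 0, 0, 0, 0, 1, 0]],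
    ![![0, 0, 0, 0, 0, 0, 0, 0], ![0, 1, 0, 0, 0, 0, 0, 0], ![0, 0, -1, 0, 0, 0, 0, 0], ![0, 0, 0, -2, 0, 0, 0, 0], ![0, 0, 0, 0, 0, 0, 0, 0], ![0, 0, 0, 0, 0, -1, 0, 0], ![0, 0, 0, 0, 0, 0, -1, 0], ![0, 0, 0, 0, 0, 0, 0, 0]]]

def mul (F : Type*) [Field F] (x y : Fin 8 → F) : Fin 8 → F :=
  fun k => ∑ i, ∑ j, x i * y j * tbl F i j k

set_option maxHeartbeats 4000000 in
/-- `W(2)`-bar does not satisfy the identity `st⁴₁`. -/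
theorem W2bar_not_satisfies_st4_1 (F : Type*) [Field F] [CharZero F] :
    ∃ x : Fin 4 → (Fin 8 → F),
      ∑ σ : Equiv.Perm (Fin 4), (Equiv.Perm.sign σ : ℤ) •
        mul F (mul F (mul F (x (σ 0)) (x (σ 1))) (x (σ 2))) (x (σ 3)) ≠ 0 := by
  refine ⟨![![1,0,0,0,0,0,0,0], ![0,1,0,0,0,0,0,0], ![0,0,0,0,1,0,0,0], ![0,0,0,0,0,0,0,1]], fun h => ?_⟩
  have h1 := congrFun h 1
  simp only [Finset.univ_perm_fin_succ, Finset.sum_map, Fintype.sum_prod_type,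
    Equiv.toEmbedding_apply, Equiv.Perm.decomposeFin_symm_apply_zero,
    Equiv.Perm.decomposeFin_symm_apply_succ, Equiv.Perm.decomposeFin_symm_apply_one,
    Equiv.Perm.decomposeFin.symm_sign, Finset.sum_apply, Pi.smul_apply, Pi.zero_apply,
    Finset.univ_unique, Finset.sum_singleton] at h1
  simp only [show (3:Fin 4) = Fin.succ 2 from rfl, show (2:Fin 4) = Fin.succ 1 from rfl,
    show (2:Fin 3) = Fin.succ 1 from rfl,
    Equiv.Perm.decomposeFin_symm_apply_zero, Equiv.Perm.decomposeFin_symm_apply_succ,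
    Equiv.Perm.decomposeFin_symm_apply_one] at h1
  simp [mul, tbl, Fin.sum_univ_succ, Equiv.swap_apply_def] at h1
end

section
/- For every α, β in F, the subspace of W(2)-bar spanned by e_1+αe_8, e_2, e_3, e_4, e_5+βe_8, e_6, e_7 is closed under multiplication, i.e. is a 7-dimensional subalgebra. -/
lemma span_cond (F : Type*) [Field F] (α β : F) (v : Fin 8 → F)
    (hv : v ∈ Submodule.span F
        ({(Pi.single 0 1 + α • (Pi.single 7 1 : Fin 8 → F)), Pi.single 1 1, Pi.single 2 1, Pi.single 3 1,
          (Pi.single 4 1 + β • (Pi.single 7 1 : Fin 8 → F)), Pi.single 5 1, Pi.single 6 1} : Set (Fin 8 → F))) :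
    v 7 = α * v 0 + β * v 4 := by
  induction hv using Submodule.span_induction with
  | mem w hw =>
    rcases hw with h|h|h|h|h|h|h <;> subst h <;>
      simp [Pi.single_apply] <;> ring
  | zero => simp
  | add w z _ _ hw hz => simp [hw, hz]; ring
  | smul c w _ hw => simp [hw]; ring

lemma cond_span (F : Type*) [Field F] (α β : F) (v : Fin 8 → F)
    (h : v 7 = α * v 0 + β * v 4) :
    v ∈ Submodule.span F
        ({(Pi.single 0 1 + α • (Pi.single 7 1 : Fin 8 → F)), Pi.single 1 1, Pi.single 2 1, Pi.single 3 1,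
          (Pi.single 4 1 + β • (Pi.single 7 1 : Fin 8 → F)), Pi.single 5 1, Pi.single 6 1} : Set (Fin 8 → F)) := by
  have hv : v = v 0 • ((Pi.single 0 1 : Fin 8 → F) + α • (Pi.single 7 1 : Fin 8 → F))
      + v 1 • (Pi.single 1 1 : Fin 8 → F) + v 2 • (Pi.single 2 1 : Fin 8 → F)
      + v 3 • (Pi.single 3 1 : Fin 8 → F)
      + v 4 • ((Pi.single 4 1 : Fin 8 → F) + β • (Pi.single 7 1 : Fin 8 → F))
      + v 5 • (Pi.single 5 1 : Fin 8 → F) + v 6 • (Pi.single 6 1 : Fin 8 → F) := by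
    funext k
    fin_cases k <;> simp [Pi.single_apply, h] <;> ring
  rw [hv]
  refine Submodule.add_mem _ (Submodule.add_mem _ (Submodule.add_mem _ (Submodule.add_mem _
    (Submodule.add_mem _ (Submodule.add_mem _ ?_ ?_) ?_) ?_) ?_) ?_) ?_ <;>
    exact Submodule.smul_mem _ _ (Submodule.subset_span (by simp))

set_option maxHeartbeats 1000000 in
/-- For all `α β`, the span of `e₁+αe₈, e₂, e₃, e₄, e₅+βe₈, e₆, e₇` is closed under the
multiplication of `W(2)`-bar. -/
theorem W2bar_Sab_subalgebra (F : Type*) [Field F] [CharZero F] (α β : F) :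
    ∀ x ∈ Submodule.span F
        ({(Pi.single 0 1 + α • (Pi.single 7 1 : Fin 8 → F)), Pi.single 1 1, Pi.single 2 1, Pi.single 3 1,
          (Pi.single 4 1 + β • (Pi.single 7 1 : Fin 8 → F)), Pi.single 5 1, Pi.single 6 1} : Set (Fin 8 → F)),
      ∀ y ∈ Submodule.span F
        ({(Pi.single 0 1 + α • (Pi.single 7 1 : Fin 8 → F)), Pi.single 1 1, Pi.single 2 1, Pi.single 3 1,
          (Pi.single 4 1 + β • (Pi.single 7 1 : Fin 8 → F)), Pi.single 5 1, Pi.single 6 1} : Set (Fin 8 → F)),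
        mul F x y ∈ Submodule.span F
        ({(Pi.single 0 1 + α • (Pi.single 7 1 : Fin 8 → F)), Pi.single 1 1, Pi.single 2 1, Pi.single 3 1,
          (Pi.single 4 1 + β • (Pi.single 7 1 : Fin 8 → F)), Pi.single 5 1, Pi.single 6 1} : Set (Fin 8 → F)) := by
  intro x hx y hy
  have hy' := span_cond F α β y hy
  apply cond_span
  simp only [mul]
  rw [Fin.sum_univ_eight]
  simp only [Fin.sum_univ_eight]
  simp only [show tbl F 0 0 7 = (0:F) from rfl,
    show tbl F 0 1 7 = (0:F) from rfl,
    show tbl F 0 2 7 = (0:F) from rfl,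
    show tbl F 0 3 7 = (0:F) from rfl,
    show tbl F 0 4 7 = (0:F) from rfl,
    show tbl F 0 5 7 = (0:F) from rfl,
    show tbl F 0 6 7 = (0:F) from rfl,
    show tbl F 0 7 7 = (-1:F) from rfl,
    show tbl F 1 0 7 = (0:F) from rfl,
    show tbl F 1 1 7 = (0:F) from rfl,
    show tbl F 1 2 7 = (0:F) from rfl,
    show tbl F 1 3 7 = (0:F) from rfl,
    show tbl F 1 4 7 = (0:F) from rfl,
    show tbl F 1 5 7 = (0:F) from rfl,
    show tbl F 1 6 7 = (0:F) from rfl,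
    show tbl F 1 7 7 = (0:F) from rfl,
    show tbl F 2 0 7 = (0:F) from rfl,
    show tbl F 2 1 7 = (0:F) from rfl,
    show tbl F 2 2 7 = (0:F) from rfl,
    show tbl F 2 3 7 = (0:F) from rfl,
    show tbl F 2 4 7 = (0:F) from rfl,
    show tbl F 2 5 7 = (0:F) from rfl,
    show tbl F 2 6 7 = (0:F) from rfl,
    show tbl F 2 7 7 = (0:F) from rfl,
    show tbl F 3 0 7 = (0:F) from rfl,
    show tbl F 3 1 7 = (0:F) from rfl,
    show tbl F 3 2 7 = (0:F) from rfl,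
    show tbl F 3 3 7 = (0:F) from rfl,
    show tbl F 3 4 7 = (0:F) from rfl,
    show tbl F 3 5 7 = (0:F) from rfl,
    show tbl F 3 6 7 = (0:F) from rfl,
    show tbl F 3 7 7 = (0:F) from rfl,
    show tbl F 4 0 7 = (0:F) from rfl,
    show tbl F 4 1 7 = (0:F) from rfl,
    show tbl F 4 2 7 = (0:F) from rfl,
    show tbl F 4 3 7 = (0:F) from rfl,
    show tbl F 4 4 7 = (0:F) from rfl,
    show tbl F 4 5 7 = (0:F) from rfl,
    show tbl F 4 6 7 = (0:F) from rfl,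
    show tbl F 4 7 7 = (-2:F) from rfl,
    show tbl F 5 0 7 = (0:F) from rfl,
    show tbl F 5 1 7 = (0:F) from rfl,
    show tbl F 5 2 7 = (0:F) from rfl,
    show tbl F 5 3 7 = (0:F) from rfl,
    show tbl F 5 4 7 = (0:F) from rfl,
    show tbl F 5 5 7 = (0:F) from rfl,
    show tbl F 5 6 7 = (0:F) from rfl,
    show tbl F 5 7 7 = (0:F) from rfl,
    show tbl F 6 0 7 = (0:F) from rfl,
    show tbl F 6 1 7 = (0:F) from rfl,
    show tbl F 6 2 7 = (0:F) from rfl,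
    show tbl F 6 3 7 = (0:F) from rfl,
    show tbl F 6 4 7 = (0:F) from rfl,
    show tbl F 6 5 7 = (0:F) from rfl,
    show tbl F 6 6 7 = (0:F) from rfl,
    show tbl F 6 7 7 = (0:F) from rfl,
    show tbl F 7 0 7 = (0:F) from rfl,
    show tbl F 7 1 7 = (0:F) from rfl,
    show tbl F 7 2 7 = (0:F) from rfl,
    show tbl F 7 3 7 = (0:F) from rfl,
    show tbl F 7 4 7 = (0:F) from rfl,
    show tbl F 7 5 7 = (0:F) from rfl,
    show tbl F 7 6 7 = (0:F) from rfl,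
    show tbl F 7 7 7 = (0:F) from rfl,
    show tbl F 0 0 0 = (-1:F) from rfl,
    show tbl F 0 1 0 = (0:F) from rfl,
    show tbl F 0 2 0 = (0:F) from rfl,
    show tbl F 0 3 0 = (0:F) from rfl,
    show tbl F 0 4 0 = (0:F) from rfl,
    show tbl F 0 5 0 = (0:F) from rfl,
    show tbl F 0 6 0 = (0:F) from rfl,
    show tbl F 0 7 0 = (0:F) from rfl,
    show tbl F 1 0 0 = (0:F) from rfl,
    show tbl F 1 1 0 = (0:F) from rfl,
    show tbl F 1 2 0 = (0:F) from rfl,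
    show tbl F 1 3 0 = (0:F) from rfl,
    show tbl F 1 4 0 = (0:F) from rfl,
    show tbl F 1 5 0 = (0:F) from rfl,
    show tbl F 1 6 0 = (0:F) from rfl,
    show tbl F 1 7 0 = (0:F) from rfl,
    show tbl F 2 0 0 = (0:F) from rfl,
    show tbl F 2 1 0 = (0:F) from rfl,
    show tbl F 2 2 0 = (0:F) from rfl,
    show tbl F 2 3 0 = (0:F) from rfl,
    show tbl F 2 4 0 = (0:F) from rfl,
    show tbl F 2 5 0 = (0:F) from rfl,
    show tbl F 2 6 0 = (0:F) from rfl,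
    show tbl F 2 7 0 = (0:F) from rfl,
    show tbl F 3 0 0 = (0:F) from rfl,
    show tbl F 3 1 0 = (0:F) from rfl,
    show tbl F 3 2 0 = (0:F) from rfl,
    show tbl F 3 3 0 = (0:F) from rfl,
    show tbl F 3 4 0 = (0:F) from rfl,
    show tbl F 3 5 0 = (0:F) from rfl,
    show tbl F 3 6 0 = (0:F) from rfl,
    show tbl F 3 7 0 = (0:F) from rfl,
    show tbl F 4 0 0 = (-2:F) from rfl,
    show tbl F 4 1 0 = (0:F) from rfl,
    show tbl F 4 2 0 = (0:F) from rfl,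
    show tbl F 4 3 0 = (0:F) from rfl,
    show tbl F 4 4 0 = (0:F) from rfl,
    show tbl F 4 5 0 = (0:F) from rfl,
    show tbl F 4 6 0 = (0:F) from rfl,
    show tbl F 4 7 0 = (0:F) from rfl,
    show tbl F 5 0 0 = (0:F) from rfl,
    show tbl F 5 1 0 = (0:F) from rfl,
    show tbl F 5 2 0 = (0:F) from rfl,
    show tbl F 5 3 0 = (0:F) from rfl,
    show tbl F 5 4 0 = (0:F) from rfl,
    show tbl F 5 5 0 = (0:F) from rfl,
    show tbl F 5 6 0 = (0:F) from rfl,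
    show tbl F 5 7 0 = (0:F) from rfl,
    show tbl F 6 0 0 = (0:F) from rfl,
    show tbl F 6 1 0 = (0:F) from rfl,
    show tbl F 6 2 0 = (0:F) from rfl,
    show tbl F 6 3 0 = (0:F) from rfl,
    show tbl F 6 4 0 = (0:F) from rfl,
    show tbl F 6 5 0 = (0:F) from rfl,
    show tbl F 6 6 0 = (0:F) from rfl,
    show tbl F 6 7 0 = (0:F) from rfl,
    show tbl F 7 0 0 = (0:F) from rfl,
    show tbl F 7 1 0 = (0:F) from rfl,
    show tbl F 7 2 0 = (0:F) from rfl,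
    show tbl F 7 3 0 = (0:F) from rfl,
    show tbl F 7 4 0 = (0:F) from rfl,
    show tbl F 7 5 0 = (0:F) from rfl,
    show tbl F 7 6 0 = (0:F) from rfl,
    show tbl F 7 7 0 = (0:F) from rfl,
    show tbl F 0 0 4 = (0:F) from rfl,
    show tbl F 0 1 4 = (0:F) from rfl,
    show tbl F 0 2 4 = (0:F) from rfl,
    show tbl F 0 3 4 = (0:F) from rfl,
    show tbl F 0 4 4 = (-1:F) from rfl,
    show tbl F 0 5 4 = (0:F) from rfl,
    show tbl F 0 6 4 = (0:F) from rfl,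
    show tbl F 0 7 4 = (0:F) from rfl,
    show tbl F 1 0 4 = (0:F) from rfl,
    show tbl F 1 1 4 = (0:F) from rfl,
    show tbl F 1 2 4 = (0:F) from rfl,
    show tbl F 1 3 4 = (0:F) from rfl,
    show tbl F 1 4 4 = (0:F) from rfl,
    show tbl F 1 5 4 = (0:F) from rfl,
    show tbl F 1 6 4 = (0:F) from rfl,
    show tbl F 1 7 4 = (0:F) from rfl,
    show tbl F 2 0 4 = (0:F) from rfl,
    show tbl F 2 1 4 = (0:F) from rfl,
    show tbl F 2 2 4 = (0:F) from rfl,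
    show tbl F 2 3 4 = (0:F) from rfl,
    show tbl F 2 4 4 = (0:F) from rfl,
    show tbl F 2 5 4 = (0:F) from rfl,
    show tbl F 2 6 4 = (0:F) from rfl,
    show tbl F 2 7 4 = (0:F) from rfl,
    show tbl F 3 0 4 = (0:F) from rfl,
    show tbl F 3 1 4 = (0:F) from rfl,
    show tbl F 3 2 4 = (0:F) from rfl,
    show tbl F 3 3 4 = (0:F) from rfl,
    show tbl F 3 4 4 = (0:F) from rfl,
    show tbl F 3 5 4 = (0:F) from rfl,
    show tbl F 3 6 4 = (0:F) from rfl,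
    show tbl F 3 7 4 = (0:F) from rfl,
    show tbl F 4 0 4 = (0:F) from rfl,
    show tbl F 4 1 4 = (0:F) from rfl,
    show tbl F 4 2 4 = (0:F) from rfl,
    show tbl F 4 3 4 = (0:F) from rfl,
    show tbl F 4 4 4 = (-2:F) from rfl,
    show tbl F 4 5 4 = (0:F) from rfl,
    show tbl F 4 6 4 = (0:F) from rfl,
    show tbl F 4 7 4 = (0:F) from rfl,
    show tbl F 5 0 4 = (0:F) from rfl,
    show tbl F 5 1 4 = (0:F) from rfl,
    show tbl F 5 2 4 = (0:F) from rfl,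
    show tbl F 5 3 4 = (0:F) from rfl,
    show tbl F 5 4 4 = (0:F) from rfl,
    show tbl F 5 5 4 = (0:F) from rfl,
    show tbl F 5 6 4 = (0:F) from rfl,
    show tbl F 5 7 4 = (0:F) from rfl,
    show tbl F 6 0 4 = (0:F) from rfl,
    show tbl F 6 1 4 = (0:F) from rfl,
    show tbl F 6 2 4 = (0:F) from rfl,
    show tbl F 6 3 4 = (0:F) from rfl,
    show tbl F 6 4 4 = (0:F) from rfl,
    show tbl F 6 5 4 = (0:F) from rfl,
    show tbl F 6 6 4 = (0:F) from rfl,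
    show tbl F 6 7 4 = (0:F) from rfl,
    show tbl F 7 0 4 = (0:F) from rfl,
    show tbl F 7 1 4 = (0:F) from rfl,
    show tbl F 7 2 4 = (0:F) from rfl,
    show tbl F 7 3 4 = (0:F) from rfl,
    show tbl F 7 4 4 = (0:F) from rfl,
    show tbl F 7 5 4 = (0:F) from rfl,
    show tbl F 7 6 4 = (0:F) from rfl,
    show tbl F 7 7 4 = (0:F) from rfl,
    mul_zero, zero_mul, add_zero, zero_add, mul_neg, mul_one]
  linear_combination (-(x 0) - 2 * x 4) * hy'
end
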